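/- Generalized permutation insertion: if s ⊐_ℓ b by clause (sb), b = b₁ ++ ⋯ ++ b_k with each b_j nonempty, and c = c₁ ++ ⋯ ++ c_k is any sequence split into k (possibly empty) parts, then [s] ++ c ⊐_ℓ b₁ ++ c₁ ++ b₂ ++ c₂ ++ ⋯ ++ b_k ++ c_k by clause (ab). -/
import Mathlib

/-- First-order terms over a signature `F` and variables `V` (variadic). -/
inductive Tm (F V : Type) : Type
  | var : V → Tm F V
  | app : F → List (Tm F V) → Tm F V

/-- Proper subterm relation: `PSub s t` means `s` is a proper subterm of `t`. -/
inductive PSub {F V : Type} : Tm F V → Tm F V → Prop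
  | arg {f : F} {ts : List (Tm F V)} {t : Tm F V} : t ∈ ts → PSub t (Tm.app f ts)
  | trans {f : F} {ts : List (Tm F V)} {s t : Tm F V} : t ∈ ts → PSub s t → PSub s (Tm.app f ts)

/-- Terms or sequences of terms. -/
abbrev TS (F V : Type) := Tm F V ⊕ List (Tm F V)

/-- The order `⊐_ℓ` on terms and sequences of terms, given a precedence `prec`. -/
inductive Spl {F V : Type} (prec : F → F → Prop) (ℓ : ℕ) : TS F V → TS F V → Prop
  | st {f g : F} {ss ts : List (Tm F V)} :
      prec f g → (∀ t ∈ ts, PSub t (Tm.app f ss)) → ts.length ≤ ℓ →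
      Spl prec ℓ (Sum.inl (Tm.app f ss)) (Sum.inl (Tm.app g ts))
  | sb {f : F} {ss ts : List (Tm F V)} :
      (∀ t ∈ ts, Spl prec ℓ (Sum.inl (Tm.app f ss)) (Sum.inl t)) → ts.length ≤ ℓ →
      Spl prec ℓ (Sum.inl (Tm.app f ss)) (Sum.inr ts)
  | ab {ss ts : List (Tm F V)} (bs : List (List (Tm F V)))
      (i : ℕ) (s : Tm F V) (b : List (Tm F V)) :
      bs.length = ss.length →
      bs.flatten.Perm ts →
      (∀ (j : ℕ) s' b', ss[j]? = some s' → bs[j]? = some b' →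
        b' ≠ [s'] → Spl prec ℓ (Sum.inl s') (Sum.inr b')) →
      ss[i]? = some s → bs[i]? = some b →
      Spl prec ℓ (Sum.inl s) (Sum.inr b) →
      Spl prec ℓ (Sum.inr ss) (Sum.inr ts)



lemma perm_zip_flatten {α : Type} : ∀ (bs cs : List (List α)), bs.length = cs.length →
    (List.zipWith (· ++ ·) bs cs).flatten.Perm (bs.flatten ++ cs.flatten) := by
  intro bs
  induction bs with
  | nil => intro cs h; cases cs <;> simp_all
  | cons b bs ih =>
    intro cs h
    cases cs with
    | nil => simp at h
    | cons c cs =>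
      simp only [List.zipWith_cons_cons, List.flatten_cons, List.length_cons] at *
      have hrest := ih cs (by omega)
      have e1 : (b ++ c) ++ (List.zipWith (· ++ ·) bs cs).flatten
          = b ++ (c ++ (List.zipWith (· ++ ·) bs cs).flatten) := by simp [List.append_assoc]
      have p1 : List.Perm (b ++ (c ++ (List.zipWith (· ++ ·) bs cs).flatten))
          (b ++ (c ++ (bs.flatten ++ cs.flatten))) := (hrest.append_left c).append_left b
      have e2 : b ++ (c ++ (bs.flatten ++ cs.flatten))
          = b ++ ((c ++ bs.flatten) ++ cs.flatten) := by simp [List.append_assoc]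
      have p2 : List.Perm (b ++ ((c ++ bs.flatten) ++ cs.flatten))
          (b ++ ((bs.flatten ++ c) ++ cs.flatten)) :=
        (List.perm_append_comm.append_right cs.flatten).append_left b
      have e3 : b ++ ((bs.flatten ++ c) ++ cs.flatten)
          = (b ++ bs.flatten) ++ (c ++ cs.flatten) := by simp [List.append_assoc]
      rw [e1]
      exact p1.trans (e2 ▸ e3 ▸ p2)

/-- generalized permutation insertion. -/
theorem spl_perm_insert_gen {F V : Type} (prec : F → F → Prop) (ℓ : ℕ)
    (f : F) (ss : List (Tm F V)) (bs cs : List (List (Tm F V)))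
    (hlen : bs.length = cs.length) (hne : ∀ b ∈ bs, b ≠ [])
    (hsb : ∀ t ∈ bs.flatten, Spl prec ℓ (Sum.inl (Tm.app f ss)) (Sum.inl t))
    (hl : bs.flatten.length ≤ ℓ) :
    Spl prec ℓ (Sum.inr ([Tm.app f ss] ++ cs.flatten))
      (Sum.inr (List.zipWith (· ++ ·) bs cs).flatten) := by
  apply Spl.ab (bs.flatten :: cs.flatten.map (fun c => [c])) 0 (Tm.app f ss) bs.flatten
  · simp only [List.length_cons, List.length_map, List.cons_append, List.nil_append]
  · simp only [List.flatten_cons]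
    have h1 : ((cs.flatten.map fun c => [c]).flatten) = cs.flatten := by
      induction cs.flatten <;> simp_all
    rw [h1]
    exact (perm_zip_flatten bs cs hlen).symm
  · intro j s' b' hs hb hne'
    cases j with
    | zero =>
      simp only [List.cons_append, List.getElem?_cons_zero, Option.some.injEq] at hs hb
      subst hs; subst hb
      exact Spl.sb hsb hl
    | succ k =>
      exfalso
      simp only [List.cons_append, List.getElem?_cons_succ, List.getElem?_map, List.nil_append] at hs hb
      rw [hs] at hb
      simp at hb
      exact hne' (hb ▸ rfl)
  · simp
  · simp
  · exact Spl.sb hsb hl
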